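/- The market satisfies AIP if and only if, for every t < T, m(S_{t+1}|𝓕_t) ≤ S_t ≤ M(S_{t+1}|𝓕_t) P-a.s. Moreover, these conditions are also equivalent to: m(S_u|𝓕_t) ≤ S_t ≤ M(S_u|𝓕_t) P-a.s. for all 0 ≤ t ≤ u ≤ T. -/

import Mathlib

open MeasureTheory Filter

/-- A real random variable is essentially bounded w.r.t. the measure `P`. -/
def EssBdd {Ω : Type*} {F : MeasurableSpace Ω} (P : @Measure Ω F) (X : Ω → ℝ) : Prop :=
  ∃ C : ℝ, ∀ᵐ ω ∂P, |X ω| ≤ C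

/-- `Y` is the conditional essential supremum `M(X|H)` of `X` given the sub-σ-algebra `H`:
`Y` is `H`-measurable, essentially bounded, `X ≤ Y` a.s., and `Y` is a.s. below every
`H`-measurable `Z` with `X ≤ Z` a.s. -/
def IsCondEssSup {Ω : Type*} {F : MeasurableSpace Ω} (P : @Measure Ω F)
    (H : MeasurableSpace Ω) (X Y : Ω → ℝ) : Prop :=
  Measurable[H] Y ∧ EssBdd P Y ∧ (∀ᵐ ω ∂P, X ω ≤ Y ω) ∧
    ∀ Z : Ω → ℝ, Measurable[H] Z → (∀ᵐ ω ∂P, X ω ≤ Z ω) → ∀ᵐ ω ∂P, Y ω ≤ Z ω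

/-- `Y` is the conditional essential infimum `m(X|H) = -M(-X|H)`. -/
def IsCondEssInf {Ω : Type*} {F : MeasurableSpace Ω} (P : @Measure Ω F)
    (H : MeasurableSpace Ω) (X Y : Ω → ℝ) : Prop :=
  IsCondEssSup P H (fun ω => -X ω) (fun ω => -Y ω)

/-- The terminal value `∑_{u=t}^{T-1} θ_u (S_{u+1} − S_u)` of the elementary portfolio `θ`
starting at time `t` with zero initial capital. -/
def PortfolioValue (Ω : Type*) (S θ : ℕ → Ω → ℝ) (t T : ℕ) : Ω → ℝ :=
  fun ω => ∑ u ∈ Finset.Ico t T, θ u ω * (S (u + 1) ω - S u ω)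

/-- A trading strategy is admissible if at each time `u` it is `𝓕ᵤ`-measurable and
essentially bounded. -/
def IsStrategy {Ω : Type*} {F : MeasurableSpace Ω} (P : @Measure Ω F)
    (𝓕 : ℕ → MeasurableSpace Ω) (θ : ℕ → Ω → ℝ) : Prop :=
  ∀ u, Measurable[𝓕 u] (θ u) ∧ EssBdd P (θ u)

/-- Absence of Immediate Profit: for every `t < T` and every admissible strategy, the
conditional essential infimum at time `t` of the associated terminal portfolio value is
nonpositive a.s. -/
def AIP {Ω : Type*} {F : MeasurableSpace Ω} (P : @Measure Ω F)
    (𝓕 : ℕ → MeasurableSpace Ω) (S : ℕ → Ω → ℝ) (T : ℕ) : Prop :=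
  ∀ t, t < T → ∀ θ : ℕ → Ω → ℝ, IsStrategy P 𝓕 θ →
    ∀ mv : Ω → ℝ, IsCondEssInf P (𝓕 t) (PortfolioValue Ω S θ t T) mv →
      ∀ᵐ ω ∂P, mv ω ≤ 0

/-- No Arbitrage: every nonnegative terminal portfolio value obtained from zero initial
capital vanishes a.s. -/
def NA {Ω : Type*} {F : MeasurableSpace Ω} (P : @Measure Ω F)
    (𝓕 : ℕ → MeasurableSpace Ω) (S : ℕ → Ω → ℝ) (T : ℕ) : Prop :=
  ∀ t, t < T → ∀ θ : ℕ → Ω → ℝ, IsStrategy P 𝓕 θ →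
    (∀ᵐ ω ∂P, 0 ≤ PortfolioValue Ω S θ t T ω) →
      PortfolioValue Ω S θ t T =ᵐ[P] fun _ => (0 : ℝ)

section Aux

variable {Ω : Type*} {F : MeasurableSpace Ω} {P : @Measure Ω F} {H : MeasurableSpace Ω}

lemma EssBdd.neg {X : Ω → ℝ} (hX : EssBdd P X) : EssBdd P (fun ω => -X ω) := by
  obtain ⟨C, hC⟩ := hX
  exact ⟨C, hC.mono fun ω h => by rwa [abs_neg]⟩

lemma EssBdd.add {X Y : Ω → ℝ} (hX : EssBdd P X) (hY : EssBdd P Y) :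
    EssBdd P (fun ω => X ω + Y ω) := by
  obtain ⟨C, hC⟩ := hX; obtain ⟨D, hD⟩ := hY
  exact ⟨C + D, hC.mp (hD.mono fun ω h1 h2 => (abs_add_le _ _).trans (add_le_add h2 h1))⟩

lemma IsCondEssSup.congr {X X' Y Y' : Ω → ℝ} (h : IsCondEssSup P H X Y)
    (hX : ∀ ω, X ω = X' ω) (hY : ∀ ω, Y ω = Y' ω) : IsCondEssSup P H X' Y' := by
  have hXf : X = X' := funext hX
  have hYf : Y = Y' := funext hY
  rwa [hXf, hYf] at h

lemma IsCondEssSup.shift {X Y g : Ω → ℝ} (h : IsCondEssSup P H X Y)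
    (hg : Measurable[H] g) (hgb : EssBdd P g) :
    IsCondEssSup P H (fun ω => X ω + g ω) (fun ω => Y ω + g ω) := by
  obtain ⟨hmeas, hbdd, hle, hmin⟩ := h
  refine ⟨hmeas.add hg, hbdd.add hgb, hle.mono fun ω h => by dsimp only; linarith, ?_⟩
  intro Z hZ hXZ
  have := hmin (fun ω => Z ω - g ω) (hZ.sub hg) (hXZ.mono fun ω h => by dsimp only at h ⊢; linarith)
  exact this.mono fun ω h => by dsimp only at h ⊢; linarith

end Aux

lemma exists_isCondEssSup {Ω : Type*} {F : MeasurableSpace Ω} (P : @Measure Ω F)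
    [IsProbabilityMeasure P] (H : MeasurableSpace Ω) (hH : H ≤ F)
    (X : Ω → ℝ) (hXb : EssBdd P X) : ∃ Y, IsCondEssSup P H X Y := by
  classical
  obtain ⟨C₀, hC₀⟩ := hXb
  set C := max C₀ 0 with hCdef
  have hC0 : 0 ≤ C := le_max_right _ _
  have hCX : ∀ᵐ ω ∂P, |X ω| ≤ C := hC₀.mono fun ω h => h.trans (le_max_left _ _)
  set U : Set (Ω → ℝ) :=
    {Z | Measurable[H] Z ∧ (∀ ω, |Z ω| ≤ C) ∧ ∀ᵐ ω ∂P, X ω ≤ Z ω} with hUdef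
  have hCU : (fun _ => C) ∈ U := by
    refine ⟨measurable_const, fun ω => by rw [abs_of_nonneg hC0], ?_⟩
    exact hCX.mono fun ω h => (abs_le.1 h).2
  -- integrability of members of U
  have hint : ∀ Z ∈ U, Integrable Z P := by
    intro Z hZ
    refine Integrable.mono' (integrable_const C) ((hZ.1.mono hH le_rfl).aestronglyMeasurable) ?_
    exact ae_of_all _ fun ω => by rw [Real.norm_eq_abs]; exact hZ.2.1 ω
  set I : Set ℝ := (fun Z => ∫ ω, Z ω ∂P) '' U with hIdef
  have hIne : I.Nonempty := ⟨_, ⟨_, hCU, rfl⟩⟩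
  have hIbdd : BddBelow I := by
    refine ⟨-C, ?_⟩
    rintro x ⟨Z, hZ, rfl⟩
    calc (-C : ℝ) = ∫ _, (-C : ℝ) ∂P := by simp
    _ ≤ ∫ ω, Z ω ∂P := by
        refine integral_mono_ae (integrable_const _) (hint Z hZ) ?_
        exact ae_of_all _ fun ω => neg_le_of_abs_le (hZ.2.1 ω)
  set a := sInf I with hadef
  have hstep : ∀ n : ℕ, ∃ Z ∈ U, ∫ ω, Z ω ∂P < a + 1 / (n + 1) := by
    intro n
    have hpos : (0 : ℝ) < 1 / (n + 1) := by positivity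
    obtain ⟨x, hxI, hx⟩ := exists_lt_of_csInf_lt hIne (lt_add_of_pos_right a hpos)
    obtain ⟨Z, hZ, rfl⟩ := hxI
    exact ⟨Z, hZ, hx⟩
  choose g hgU hgint using hstep
  -- partial minima
  set pm : ℕ → Ω → ℝ := fun n =>
    Nat.rec (g 0) (fun n Y => fun ω => min (Y ω) (g (n + 1) ω)) n with hpm
  have hpm_succ : ∀ n ω, pm (n + 1) ω = min (pm n ω) (g (n + 1) ω) := fun n ω => rfl
  have hpmU : ∀ n, pm n ∈ U := by
    intro n
    induction n with
    | zero => exact hgU 0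
    | succ n ih =>
      refine ⟨ih.1.min (hgU (n + 1)).1, fun ω => ?_, ?_⟩
      · rw [abs_le]
        constructor
        · exact le_min (neg_le_of_abs_le (ih.2.1 ω)) (neg_le_of_abs_le ((hgU (n+1)).2.1 ω))
        · exact (min_le_left _ _).trans (le_of_abs_le (ih.2.1 ω))
      · filter_upwards [ih.2.2, (hgU (n + 1)).2.2] with ω h1 h2
        exact le_min h1 h2
  have hpm_le_g : ∀ n ω, pm n ω ≤ g n ω := by
    intro n ω
    cases n with
    | zero => exact le_rfl
    | succ n => exact min_le_right _ _
  have hpm_anti : ∀ n ω, pm (n + 1) ω ≤ pm n ω := fun n ω => min_le_left _ _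
  have hpm_lb : ∀ n ω, -C ≤ pm n ω := fun n ω => neg_le_of_abs_le ((hpmU n).2.1 ω)
  have hbdd_range : ∀ ω, BddBelow (Set.range fun n => pm n ω) := by
    intro ω
    exact ⟨-C, by rintro x ⟨n, rfl⟩; exact hpm_lb n ω⟩
  set Y : Ω → ℝ := fun ω => ⨅ n, pm n ω with hYdef
  have hYmeas : Measurable[H] Y := Measurable.iInf fun n => (hpmU n).1
  have hY_le_pm : ∀ n ω, Y ω ≤ pm n ω := fun n ω => ciInf_le (hbdd_range ω) n
  have hY_lb : ∀ ω, -C ≤ Y ω := fun ω => le_ciInf fun n => hpm_lb n ω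
  have hYabs : ∀ ω, |Y ω| ≤ C := by
    intro ω
    rw [abs_le]
    exact ⟨hY_lb ω, (hY_le_pm 0 ω).trans (le_of_abs_le ((hpmU 0).2.1 ω))⟩
  have hXY : ∀ᵐ ω ∂P, X ω ≤ Y ω := by
    have : ∀ᵐ ω ∂P, ∀ n, X ω ≤ pm n ω := ae_all_iff.2 fun n => (hpmU n).2.2
    exact this.mono fun ω h => le_ciInf fun n => h n
  have hYU : Y ∈ U := ⟨hYmeas, hYabs, hXY⟩
  have hYint : Integrable Y P := hint Y hYU
  have hYle_a : ∫ ω, Y ω ∂P ≤ a := by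
    by_contra hcon
    push_neg at hcon
    obtain ⟨n, hn⟩ := exists_nat_one_div_lt (sub_pos.2 hcon)
    have h1 : ∫ ω, Y ω ∂P ≤ ∫ ω, pm n ω ∂P :=
      integral_mono_ae hYint (hint _ (hpmU n)) (ae_of_all _ fun ω => hY_le_pm n ω)
    have h2 : ∫ ω, pm n ω ∂P ≤ ∫ ω, g n ω ∂P :=
      integral_mono_ae (hint _ (hpmU n)) (hint _ (hgU n)) (ae_of_all _ fun ω => hpm_le_g n ω)
    have := hgint n
    have hn' : (1 : ℝ) / (n + 1) < ∫ ω, Y ω ∂P - a := hn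
    linarith
  -- minimality
  refine ⟨Y, hYmeas, ⟨C, ae_of_all _ hYabs⟩, hXY, ?_⟩
  intro Z hZm hXZ
  have hnull : ∀ k : ℕ, P {ω | Z ω + 1 / (k + 1) ≤ Y ω} = 0 := by
    intro k
    set ε : ℝ := 1 / (k + 1) with hε
    have hεpos : 0 < ε := by positivity
    set A : Set Ω := {ω | Z ω + ε ≤ Y ω} with hA
    have hAm : MeasurableSet[H] A := measurableSet_le (hZm.add measurable_const) hYmeas
    set W : Ω → ℝ := fun ω => if Z ω + ε ≤ Y ω then max (Y ω - ε) (-C) else Y ω with hW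
    have hWm : Measurable[H] W := by
      refine Measurable.ite hAm ((hYmeas.sub measurable_const).max measurable_const) hYmeas
    have hWabs : ∀ ω, |W ω| ≤ C := by
      intro ω
      simp only [hW]
      split_ifs with h
      · rw [abs_le]
        refine ⟨le_max_right _ _, max_le (by linarith [le_of_abs_le (hYabs ω)]) (by linarith)⟩
      · exact hYabs ω
    have hXW : ∀ᵐ ω ∂P, X ω ≤ W ω := by
      filter_upwards [hXZ, hXY, hCX] with ω h1 h2 h3
      simp only [hW]
      split_ifs with h
      · exact le_max_of_le_left (by linarith)
      · exact h2
    have hWU : W ∈ U := ⟨hWm, hWabs, hXW⟩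
    have haW : a ≤ ∫ ω, W ω ∂P := csInf_le hIbdd ⟨W, hWU, rfl⟩
    have hWle : ∀ᵐ ω ∂P, W ω ≤ Y ω - ε * A.indicator (fun _ => (1:ℝ)) ω := by
      filter_upwards [hXZ, hCX] with ω h1 h3
      simp only [hW]
      split_ifs with h
      · have hAω : ω ∈ A := h
        rw [Set.indicator_of_mem hAω]
        have : -C ≤ Y ω - ε := by
          have := neg_le_of_abs_le h3
          linarith
        rw [max_eq_left this]
        linarith
      · have hAω : ω ∉ A := h
        rw [Set.indicator_of_notMem hAω]
        simp
    have hAF : MeasurableSet[F] A := hH _ hAm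
    have hindint : Integrable (fun ω => A.indicator (fun _ => (1:ℝ)) ω) P := by
      clear! H
      exact (integrable_const (1:ℝ)).indicator hAF
    have hWint : Integrable W P := hint W hWU
    have hint2 : Integrable (fun ω => Y ω - ε * A.indicator (fun _ => (1:ℝ)) ω) P :=
      hYint.sub (hindint.const_mul ε)
    have hWY : ∫ ω, W ω ∂P ≤ ∫ ω, (Y ω - ε * A.indicator (fun _ => (1:ℝ)) ω) ∂P :=
      integral_mono_ae hWint hint2 hWle
    have hcalc : ∫ ω, (Y ω - ε * A.indicator (fun _ => (1:ℝ)) ω) ∂P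
        = ∫ ω, Y ω ∂P - ε * (P A).toReal := by
      clear! H
      rw [integral_sub hYint (hindint.const_mul ε), integral_const_mul,
        integral_indicator_const (1:ℝ) hAF]
      simp [Measure.real]
    have hPA : ε * (P A).toReal ≤ 0 := by
      rw [hcalc] at hWY
      linarith
    have : (P A).toReal = 0 := by
      have h0 : 0 ≤ (P A).toReal := ENNReal.toReal_nonneg
      nlinarith
    have hne : P A ≠ ⊤ := measure_ne_top P A
    exact (ENNReal.toReal_eq_zero_iff _).1 this |>.resolve_right hne
  rw [ae_iff]
  refine measure_mono_null ?_ (measure_iUnion_null fun k => hnull k)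
  intro ω hω
  simp only [Set.mem_setOf_eq, not_le] at hω
  obtain ⟨k, hk⟩ := exists_nat_one_div_lt (sub_pos.2 hω)
  exact Set.mem_iUnion.2 ⟨k, by simp only [Set.mem_setOf_eq]; linarith⟩

lemma one_step {Ω : Type*} {F : MeasurableSpace Ω} (P : @Measure Ω F)
    (H : MeasurableSpace Ω)
    (S' St : Ω → ℝ) (hSt : Measurable[H] St) (hS'b : EssBdd P S')
    (hlow : ∀ Z : Ω → ℝ, Measurable[H] Z → (∀ᵐ ω ∂P, Z ω ≤ S' ω) → ∀ᵐ ω ∂P, Z ω ≤ St ω)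
    (hup : ∀ Z : Ω → ℝ, Measurable[H] Z → (∀ᵐ ω ∂P, S' ω ≤ Z ω) → ∀ᵐ ω ∂P, St ω ≤ Z ω)
    (θ Y : Ω → ℝ) (hθ : Measurable[H] θ) (hY : Measurable[H] Y)
    (hYle : ∀ᵐ ω ∂P, Y ω ≤ θ ω * (S' ω - St ω)) :
    ∀ᵐ ω ∂P, Y ω ≤ 0 := by
  classical
  obtain ⟨C₀, hC₀⟩ := hS'b
  set C := max C₀ 0 with hCdef
  have hC0 : 0 ≤ C := le_max_right _ _
  have hCX : ∀ᵐ ω ∂P, |S' ω| ≤ C := hC₀.mono fun ω h => h.trans (le_max_left _ _)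
  set Z1 : Ω → ℝ := fun ω => if 0 < θ ω then Y ω / θ ω + St ω else -C with hZ1
  set Z2 : Ω → ℝ := fun ω => if θ ω < 0 then Y ω / θ ω + St ω else C with hZ2
  have hZ1m : Measurable[H] Z1 := by
    exact Measurable.ite (measurableSet_lt measurable_const hθ) ((hY.div hθ).add hSt)
      measurable_const
  have hZ2m : Measurable[H] Z2 := by
    exact Measurable.ite (measurableSet_lt hθ measurable_const) ((hY.div hθ).add hSt)
      measurable_const
  have hZ1le : ∀ᵐ ω ∂P, Z1 ω ≤ S' ω := by
    filter_upwards [hYle, hCX] with ω h1 h2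
    simp only [hZ1]
    split_ifs with h
    · have hd : Y ω / θ ω ≤ S' ω - St ω := by
        rw [div_le_iff₀ h, mul_comm]; exact h1
      linarith
    · linarith [neg_le_of_abs_le h2]
  have hZ2le : ∀ᵐ ω ∂P, S' ω ≤ Z2 ω := by
    filter_upwards [hYle, hCX] with ω h1 h2
    simp only [hZ2]
    split_ifs with h
    · have hd : S' ω - St ω ≤ Y ω / θ ω := by
        rw [le_div_iff_of_neg h, mul_comm]; exact h1
      linarith
    · linarith [le_of_abs_le h2]
  have h1 := hlow Z1 hZ1m hZ1le
  have h2 := hup Z2 hZ2m hZ2le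
  filter_upwards [hYle, h1, h2] with ω hy hz1 hz2
  rcases lt_trichotomy (θ ω) 0 with h | h | h
  · simp only [hZ2, if_pos h] at hz2
    have h0 : 0 ≤ Y ω / θ ω := by linarith
    have : Y ω = Y ω / θ ω * θ ω := (div_mul_cancel₀ _ (ne_of_lt h)).symm
    rw [this]
    exact mul_nonpos_of_nonneg_of_nonpos h0 h.le
  · simpa [h] using hy
  · simp only [hZ1, if_pos h] at hz1
    have h0 : Y ω / θ ω ≤ 0 := by linarith
    have : Y ω = Y ω / θ ω * θ ω := (div_mul_cancel₀ _ (ne_of_gt h)).symm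
    rw [this]
    exact mul_nonpos_of_nonpos_of_nonneg h0 h.le

lemma key_induction {Ω : Type*} {F : MeasurableSpace Ω} (P : @Measure Ω F) (T : ℕ)
    (𝓕 : ℕ → MeasurableSpace Ω) (h𝓕mono : Monotone 𝓕)
    (S : ℕ → Ω → ℝ) (hSmeas : ∀ t, Measurable[𝓕 t] (S t)) (hSbdd : ∀ t, EssBdd P (S t))
    (hB : ∀ t, t < T →
      (∀ Z : Ω → ℝ, Measurable[𝓕 t] Z → (∀ᵐ ω ∂P, Z ω ≤ S (t+1) ω) → ∀ᵐ ω ∂P, Z ω ≤ S t ω) ∧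
      (∀ Z : Ω → ℝ, Measurable[𝓕 t] Z → (∀ᵐ ω ∂P, S (t+1) ω ≤ Z ω) → ∀ᵐ ω ∂P, S t ω ≤ Z ω)) :
    ∀ n t, T ≤ t + n → ∀ θ : ℕ → Ω → ℝ, (∀ u, Measurable[𝓕 u] (θ u)) →
      ∀ Y : Ω → ℝ, Measurable[𝓕 t] Y →
      (∀ᵐ ω ∂P, Y ω ≤ ∑ u ∈ Finset.Ico t T, θ u ω * (S (u+1) ω - S u ω)) →
      ∀ᵐ ω ∂P, Y ω ≤ 0 := by
  intro n
  induction n with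
  | zero =>
    intro t hT θ hθ Y hY hYle
    have he : Finset.Ico t T = ∅ := Finset.Ico_eq_empty (by omega)
    simpa [he] using hYle
  | succ n ih =>
    intro t hT θ hθ Y hY hYle
    by_cases htT : T ≤ t
    · have he : Finset.Ico t T = ∅ := Finset.Ico_eq_empty (by omega)
      simpa [he] using hYle
    · push_neg at htT
      have ht1 : t + 1 ≤ T := htT
      have hsplit : ∀ ω, ∑ u ∈ Finset.Ico t T, θ u ω * (S (u+1) ω - S u ω)
          = θ t ω * (S (t+1) ω - S t ω)
            + ∑ u ∈ Finset.Ico (t+1) T, θ u ω * (S (u+1) ω - S u ω) := by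
        intro ω
        rw [← Finset.sum_Ico_consecutive _ (Nat.le_succ t) ht1]
        congr 1
        rw [Nat.Ico_succ_singleton, Finset.sum_singleton]
      have hY' : Measurable[𝓕 (t+1)] (fun ω => Y ω - θ t ω * (S (t+1) ω - S t ω)) := by
        have hYm : Measurable[𝓕 (t+1)] Y := hY.mono (h𝓕mono (Nat.le_succ t)) le_rfl
        have hθm : Measurable[𝓕 (t+1)] (θ t) := (hθ t).mono (h𝓕mono (Nat.le_succ t)) le_rfl
        have hS1 : Measurable[𝓕 (t+1)] (S (t+1)) := hSmeas (t+1)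
        have hS0 : Measurable[𝓕 (t+1)] (S t) := (hSmeas t).mono (h𝓕mono (Nat.le_succ t)) le_rfl
        exact hYm.sub (hθm.mul (hS1.sub hS0))
      have htail := ih (t+1) (by omega) θ hθ _ hY'
        (hYle.mono fun ω h => by rw [hsplit ω] at h; show Y ω - _ ≤ _; linarith)
      have hYθ : ∀ᵐ ω ∂P, Y ω ≤ θ t ω * (S (t+1) ω - S t ω) :=
        htail.mono fun ω h => by simp only [sub_nonpos] at h; exact h
      exact one_step P (𝓕 t) (S (t+1)) (S t) (hSmeas t) (hSbdd (t+1))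
        (hB t htT).1 (hB t htT).2 (θ t) Y (hθ t) hY hYθ


lemma pv_eq {Ω : Type*} (S : ℕ → Ω → ℝ) (t u T : ℕ) (htu : t ≤ u) (huT : u ≤ T) (c : ℝ) (ω : Ω) :
    ∑ w ∈ Finset.Ico t T, (if t ≤ w ∧ w < u then c else 0) * (S (w + 1) ω - S w ω)
      = c * (S u ω - S t ω) := by
  rw [← Finset.sum_Ico_consecutive _ htu huT]
  have h2 : ∑ w ∈ Finset.Ico u T, (if t ≤ w ∧ w < u then c else 0) * (S (w + 1) ω - S w ω)
      = 0 := by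
    apply Finset.sum_eq_zero
    intro w hw
    rw [Finset.mem_Ico] at hw
    rw [if_neg (by omega), zero_mul]
  have h1 : ∑ w ∈ Finset.Ico t u, (if t ≤ w ∧ w < u then c else 0) * (S (w + 1) ω - S w ω)
      = ∑ w ∈ Finset.Ico t u, c * (S (w + 1) ω - S w ω) := by
    apply Finset.sum_congr rfl
    intro w hw
    rw [Finset.mem_Ico] at hw
    rw [if_pos ⟨hw.1, hw.2⟩]
  rw [h1, h2, add_zero, ← Finset.mul_sum]
  congr 1
  rw [Finset.sum_Ico_eq_sub _ htu, Finset.sum_range_sub (fun w => S w ω),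
    Finset.sum_range_sub (fun w => S w ω)]
  ring

/-- Characterization of AIP: the market satisfies AIP iff
`m(S_{t+1}|𝓕_t) ≤ S_t ≤ M(S_{t+1}|𝓕_t)` a.s. for all `t < T`, and this is also equivalent to
`m(S_u|𝓕_t) ≤ S_t ≤ M(S_u|𝓕_t)` a.s. for all `t ≤ u ≤ T`. -/
theorem aip_iff_condEssInf_le_le_condEssSup {Ω : Type*} [F : MeasurableSpace Ω]
    (P : Measure Ω) [IsProbabilityMeasure P] (T : ℕ)
    (𝓕 : ℕ → MeasurableSpace Ω) (h𝓕mono : Monotone 𝓕) (h𝓕le : ∀ t, 𝓕 t ≤ F)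
    (S : ℕ → Ω → ℝ) (hSmeas : ∀ t, Measurable[𝓕 t] (S t))
    (hSbdd : ∀ t, EssBdd P (S t)) (hSnonneg : ∀ t, ∀ᵐ ω ∂P, 0 ≤ S t ω) :
    (AIP P 𝓕 S T ↔
      ∀ t, t < T → ∀ mS MS : Ω → ℝ,
        IsCondEssInf P (𝓕 t) (S (t + 1)) mS → IsCondEssSup P (𝓕 t) (S (t + 1)) MS →
        ∀ᵐ ω ∂P, mS ω ≤ S t ω ∧ S t ω ≤ MS ω) ∧
    (AIP P 𝓕 S T ↔
      ∀ t u, t ≤ u → u ≤ T → ∀ mS MS : Ω → ℝ,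
        IsCondEssInf P (𝓕 t) (S u) mS → IsCondEssSup P (𝓕 t) (S u) MS →
        ∀ᵐ ω ∂P, mS ω ≤ S t ω ∧ S t ω ≤ MS ω) := by
  classical
  have hAC : AIP P 𝓕 S T →
      ∀ t u, t ≤ u → u ≤ T → ∀ mS MS : Ω → ℝ,
        IsCondEssInf P (𝓕 t) (S u) mS → IsCondEssSup P (𝓕 t) (S u) MS →
        ∀ᵐ ω ∂P, mS ω ≤ S t ω ∧ S t ω ≤ MS ω := by
    intro hA t u htu huT mS MS hmS hMS
    rcases eq_or_lt_of_le htu with rfl | htu'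
    · have h1 := hmS.2.2.1
      have h2 := hMS.2.2.1
      filter_upwards [h1, h2] with ω a b
      try dsimp only at a
      exact ⟨by linarith, b⟩
    · have htT : t < T := lt_of_lt_of_le htu' huT
      set θ1 : ℕ → Ω → ℝ := fun w _ => if t ≤ w ∧ w < u then 1 else 0 with hθ1
      have hstrat1 : IsStrategy P 𝓕 θ1 := fun w =>
        ⟨measurable_const, ⟨1, ae_of_all _ fun ω => by
          simp only [hθ1]; split_ifs <;> simp⟩⟩
      have hPV1 : ∀ ω, PortfolioValue Ω S θ1 t T ω = S u ω - S t ω := by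
        intro ω
        have h := pv_eq S t u T htu huT 1 ω
        simp only [PortfolioValue, hθ1]
        rw [h, one_mul]
      have hmv1 : IsCondEssInf P (𝓕 t) (PortfolioValue Ω S θ1 t T)
          (fun ω => mS ω - S t ω) := by
        show IsCondEssSup P (𝓕 t) _ _
        have hbase : IsCondEssSup P (𝓕 t) (fun ω => -S u ω) (fun ω => -mS ω) := hmS
        have hshift := hbase.shift (hSmeas t) (hSbdd t)
        exact hshift.congr (fun ω => by rw [hPV1 ω]; ring) (fun ω => by ring)
      have hL := hA t htT θ1 hstrat1 _ hmv1
      set θ2 : ℕ → Ω → ℝ := fun w _ => if t ≤ w ∧ w < u then -1 else 0 with hθ2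
      have hstrat2 : IsStrategy P 𝓕 θ2 := fun w =>
        ⟨measurable_const, ⟨1, ae_of_all _ fun ω => by
          simp only [hθ2]; split_ifs <;> simp⟩⟩
      have hPV2 : ∀ ω, PortfolioValue Ω S θ2 t T ω = -(S u ω - S t ω) := by
        intro ω
        have h := pv_eq S t u T htu huT (-1) ω
        simp only [PortfolioValue, hθ2]
        rw [h]; ring
      have hmv2 : IsCondEssInf P (𝓕 t) (PortfolioValue Ω S θ2 t T)
          (fun ω => S t ω - MS ω) := by
        show IsCondEssSup P (𝓕 t) _ _
        have hshift := hMS.shift (hSmeas t).neg (hSbdd t).neg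
        exact hshift.congr (fun ω => by rw [hPV2 ω, Pi.neg_apply]; ring) (fun ω => by rw [Pi.neg_apply]; ring)
      have hU := hA t htT θ2 hstrat2 _ hmv2
      filter_upwards [hL, hU] with ω a b
      try dsimp only at a b
      exact ⟨by linarith, by linarith⟩
  have hBA : (∀ t, t < T → ∀ mS MS : Ω → ℝ,
        IsCondEssInf P (𝓕 t) (S (t + 1)) mS → IsCondEssSup P (𝓕 t) (S (t + 1)) MS →
        ∀ᵐ ω ∂P, mS ω ≤ S t ω ∧ S t ω ≤ MS ω) → AIP P 𝓕 S T := by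
    intro hBst t0 ht0 θ hθs mv hmv
    have hB : ∀ t, t < T →
        (∀ Z : Ω → ℝ, Measurable[𝓕 t] Z → (∀ᵐ ω ∂P, Z ω ≤ S (t + 1) ω) →
          ∀ᵐ ω ∂P, Z ω ≤ S t ω) ∧
        (∀ Z : Ω → ℝ, Measurable[𝓕 t] Z → (∀ᵐ ω ∂P, S (t + 1) ω ≤ Z ω) →
          ∀ᵐ ω ∂P, S t ω ≤ Z ω) := by
      intro t ht
      obtain ⟨MS, hMS⟩ := exists_isCondEssSup P (𝓕 t) (h𝓕le t) (S (t + 1)) (hSbdd (t + 1))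
      obtain ⟨W, hW⟩ := exists_isCondEssSup P (𝓕 t) (h𝓕le t)
        (fun ω => -S (t + 1) ω) ((hSbdd (t + 1)).neg)
      have hmSdef : IsCondEssInf P (𝓕 t) (S (t + 1)) (fun ω => -W ω) := by
        show IsCondEssSup P (𝓕 t) _ _
        exact hW.congr (fun ω => rfl) (fun ω => (neg_neg (W ω)).symm)
      have hsts := hBst t ht (fun ω => -W ω) MS hmSdef hMS
      constructor
      · intro Z hZm hZle
        have hmin := hW.2.2.2 (fun ω => -Z ω) hZm.neg
          (hZle.mono fun ω h => by try dsimp only; linarith)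
        filter_upwards [hmin, hsts] with ω h1 h2
        try dsimp only at h1
        have := h2.1
        try dsimp only at this
        linarith
      · intro Z hZm hZle
        have hmin := hMS.2.2.2 Z hZm hZle
        filter_upwards [hmin, hsts] with ω h1 h2
        linarith [h2.2]
    have hmvm : Measurable[𝓕 t0] mv := by
      have h := hmv.1.neg
      convert h using 1; funext ω; simp
    have hmvle : ∀ᵐ ω ∂P, mv ω ≤ PortfolioValue Ω S θ t0 T ω :=
      hmv.2.2.1.mono fun ω h => by try dsimp only at h; linarith
    exact key_induction P T 𝓕 h𝓕mono S hSmeas hSbdd hB T t0 (Nat.le_add_left T t0) θ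
      (fun u => (hθs u).1) mv hmvm hmvle
  constructor
  · constructor
    · intro hA t ht mS MS hm hM
      exact hAC hA t (t + 1) (Nat.le_succ t) ht mS MS hm hM
    · exact hBA
  · constructor
    · exact hAC
    · intro hC
      exact hBA (fun t ht => hC t (t + 1) (Nat.le_succ t) ht)
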